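/- Let f : ℝⁿ → ℝ be differentiable, λ-strongly convex (i.e. x ↦ f(x) − (λ/2)‖x‖₂² is convex) with λ > 0, attaining its minimum value f* at some point, and having coordinate-wise Lipschitz gradient with constants L_1,…,L_n > 0. Let S = ∑_{i=1}^n L_i and p_i = L_i/S. Then λ ≤ S and for every x ∈ ℝⁿ, ∑_{i=1}^n p_i · min( f(x + t_i e_i), f(x − t_i e_i) ) − f* ≤ (1 − λ/S)·( f(x) − f* ), where t_i = |∂_i f(x)| / L_i. -/

import Mathlib

open Set Finset

/-- 1-D descent lemma: if `φ` has derivative `D` which is Lipschitz-from-0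
with constant `Lc`, then `φ h ≤ φ 0 + h * D 0 + Lc/2 * h²`. -/
lemma stp_descent_aux (φ D : ℝ → ℝ) (Lc : ℝ) (hLc : 0 ≤ Lc)
    (hder : ∀ t, HasDerivAt φ (D t) t)
    (hlip : ∀ t, |D t - D 0| ≤ Lc * |t|) (h : ℝ) :
    φ h ≤ φ 0 + h * D 0 + Lc / 2 * h ^ 2 := by
  set ψ : ℝ → ℝ := fun t => φ t - t * D 0 - Lc / 2 * t ^ 2 with hψdef
  have hψder : ∀ t, HasDerivAt ψ (D t - D 0 - Lc * t) t := by
    intro t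
    have h1 : HasDerivAt (fun t : ℝ => t * D 0) (D 0) t := by
      simpa using (hasDerivAt_id t).mul_const (D 0)
    have h2 : HasDerivAt (fun t : ℝ => Lc / 2 * t ^ 2) (Lc * t) t := by
      have := (hasDerivAt_pow 2 t).const_mul (Lc / 2)
      refine this.congr_deriv ?_
      push_cast
      ring
    exact ((hder t).sub h1).sub h2
  have hcont : Continuous ψ :=
    continuous_iff_continuousAt.2 fun t => (hψder t).differentiableAt.continuousAt
  have hkey : ψ h ≤ ψ 0 := by
    rcases le_or_gt 0 h with hh | hh
    · have hanti : AntitoneOn ψ (Icc 0 h) := by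
        apply antitoneOn_of_deriv_nonpos (convex_Icc 0 h) hcont.continuousOn
        · exact fun x _ => (hψder x).differentiableAt.differentiableWithinAt
        · intro x hx
          rw [interior_Icc] at hx
          rw [(hψder x).deriv]
          have := (abs_le.mp (hlip x)).2
          rw [abs_of_pos hx.1] at this
          linarith
      exact hanti (left_mem_Icc.2 hh) (right_mem_Icc.2 hh) hh
    · have hmono : MonotoneOn ψ (Icc h 0) := by
        apply monotoneOn_of_deriv_nonneg (convex_Icc h 0) hcont.continuousOn
        · exact fun x _ => (hψder x).differentiableAt.differentiableWithinAt
        · intro x hx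
          rw [interior_Icc] at hx
          rw [(hψder x).deriv]
          have := (abs_le.mp (hlip x)).1
          rw [abs_of_neg hx.2] at this
          linarith
      exact hmono (left_mem_Icc.2 hh.le) (right_mem_Icc.2 hh.le) hh.le
  have h0 : ψ 0 = φ 0 := by simp [hψdef]
  have hh' : ψ h = φ h - h * D 0 - Lc / 2 * h ^ 2 := rfl
  rw [hh', h0] at hkey
  linarith
lemma stp_clm_apply {n : ℕ} (ℓ : (Fin n → ℝ) →L[ℝ] ℝ) (v : Fin n → ℝ) :
    ℓ v = ∑ i, v i * ℓ (Pi.single i 1) := by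
  have hv : v = ∑ i, v i • (Pi.single i 1 : Fin n → ℝ) := by
    funext j
    simp [Finset.sum_apply, Pi.single_apply]
  conv_lhs => rw [hv]
  rw [map_sum]
  simp [smul_eq_mul]

/-- First-order lower bound for a `lam`-strongly convex differentiable `f`. -/
lemma stp_sc_lower {n : ℕ} (f : (Fin n → ℝ) → ℝ) (hf : Differentiable ℝ f)
    (lam : ℝ)
    (hsc : ConvexOn ℝ Set.univ (fun x : Fin n → ℝ =>
      f x - (lam / 2) * ∑ i, (x i) ^ 2)) (x y : Fin n → ℝ) :
    f x + (fderiv ℝ f x) (y - x) + lam / 2 * ∑ i, (y i - x i) ^ 2 ≤ f y := by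
  set u : (Fin n → ℝ) → ℝ := fun x => f x - (lam / 2) * ∑ i, (x i) ^ 2 with hu
  -- derivative of the quadratic part
  have hquad : ∀ z : Fin n → ℝ, HasFDerivAt (fun x : Fin n → ℝ => ∑ i, (x i) ^ 2)
      (∑ i, (2 * z i) • (ContinuousLinearMap.proj i : (Fin n → ℝ) →L[ℝ] ℝ)) z := by
    intro z
    apply HasFDerivAt.fun_sum
    intro i _
    have hp := (ContinuousLinearMap.proj (R := ℝ) (φ := fun _ : Fin n => ℝ) i).hasFDerivAt (x := z)
    have := hp.fun_mul hp
    have h2 : ((2 : ℝ) * z i) • (ContinuousLinearMap.proj i : (Fin n → ℝ) →L[ℝ] ℝ)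
        = z i • (ContinuousLinearMap.proj i : (Fin n → ℝ) →L[ℝ] ℝ)
          + z i • (ContinuousLinearMap.proj i : (Fin n → ℝ) →L[ℝ] ℝ) := by
      rw [two_mul, add_smul]
    rw [h2]
    simpa [pow_two, ContinuousLinearMap.proj_apply] using this
  have hud : ∀ z : Fin n → ℝ, HasFDerivAt u
      (fderiv ℝ f z - (lam / 2) • ∑ i, (2 * z i) • (ContinuousLinearMap.proj i : (Fin n → ℝ) →L[ℝ] ℝ)) z := by
    intro z
    exact (hf z).hasFDerivAt.sub ((hquad z).const_mul (lam / 2))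
  -- restrict to the segment
  set γ : ℝ →ᵃ[ℝ] (Fin n → ℝ) := AffineMap.lineMap x y with hγ
  have hγ0 : γ 0 = x := AffineMap.lineMap_apply_zero x y
  have hγ1 : γ 1 = y := AffineMap.lineMap_apply_one x y
  have hconv : ConvexOn ℝ Set.univ (u ∘ γ) := by
    have := hsc.comp_affineMap γ
    simpa using this
  have hγd : HasDerivAt (fun t : ℝ => γ t) (y - x) 0 := by
    have : (fun t : ℝ => γ t) = fun t : ℝ => t • (y - x) + x := by
      funext t
      simp [hγ, AffineMap.lineMap_apply, vsub_eq_sub, vadd_eq_add]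
    rw [this]
    simpa using ((hasDerivAt_id (0:ℝ)).smul_const (y - x)).add_const x
  have hq0 : HasDerivAt (u ∘ γ)
      ((fderiv ℝ f x - (lam / 2) • ∑ i, (2 * x i) • (ContinuousLinearMap.proj i : (Fin n → ℝ) →L[ℝ] ℝ)) (y - x)) 0 := by
    have hcomp := (hud (γ 0)).comp_hasDerivAt 0 hγd
    rw [hγ0] at hcomp
    exact hcomp
  have hslope := hconv.le_slope_of_hasDerivAt (mem_univ (0:ℝ)) (mem_univ (1:ℝ)) zero_lt_one hq0
  rw [slope_def_field] at hslope
  simp only [Function.comp_apply, hγ0, hγ1, sub_zero, div_one] at hslope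
  -- unpack
  have happ : (fderiv ℝ f x - (lam / 2) • ∑ i, (2 * x i) • (ContinuousLinearMap.proj i : (Fin n → ℝ) →L[ℝ] ℝ)) (y - x)
      = (fderiv ℝ f x) (y - x) - (lam / 2) * ∑ i, 2 * x i * (y i - x i) := by
    simp [ContinuousLinearMap.sum_apply, smul_eq_mul, Finset.mul_sum]
  rw [happ] at hslope
  have hsum : ∑ i, (y i) ^ 2 - ∑ i, (x i) ^ 2 - ∑ i, 2 * x i * (y i - x i)
      = ∑ i, (y i - x i) ^ 2 := by
    rw [← Finset.sum_sub_distrib, ← Finset.sum_sub_distrib]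
    exact Finset.sum_congr rfl fun i _ => by ring
  have hux : u x = f x - (lam / 2) * ∑ i, (x i) ^ 2 := rfl
  have huy : u y = f y - (lam / 2) * ∑ i, (y i) ^ 2 := rfl
  rw [hux, huy] at hslope
  have hsum2 : lam / 2 * (∑ i, (y i) ^ 2) - lam / 2 * (∑ i, (x i) ^ 2)
      - lam / 2 * (∑ i, 2 * x i * (y i - x i)) = lam / 2 * ∑ i, (y i - x i) ^ 2 := by
    rw [← hsum]; ring
  linarith [hslope, hsum2]

theorem stp_is_strongly_convex_contraction
    (n : ℕ) (hn : 0 < n) (f : (Fin n → ℝ) → ℝ) (hf : Differentiable ℝ f)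
    (lam : ℝ) (hlam : 0 < lam)
    (hsc : ConvexOn ℝ Set.univ (fun x : Fin n → ℝ =>
      f x - (lam / 2) * ∑ i, (x i) ^ 2))
    (xstar : Fin n → ℝ) (hmin : ∀ x, f xstar ≤ f x)
    (L : Fin n → ℝ) (hL : ∀ i, 0 < L i)
    (hlip : ∀ (i : Fin n) (x : Fin n → ℝ) (h : ℝ),
      |fderiv ℝ f (x + h • (Pi.single i 1 : Fin n → ℝ)) ((Pi.single i 1 : Fin n → ℝ))
          - fderiv ℝ f x ((Pi.single i 1 : Fin n → ℝ))| ≤ L i * |h|) :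
    lam ≤ (∑ j, L j) ∧
    ∀ x : Fin n → ℝ,
      (∑ i, (L i / ∑ j, L j) *
        min (f (x + (|fderiv ℝ f x ((Pi.single i 1 : Fin n → ℝ))| / L i) • (Pi.single i 1 : Fin n → ℝ)))
            (f (x - (|fderiv ℝ f x ((Pi.single i 1 : Fin n → ℝ))| / L i) • (Pi.single i 1 : Fin n → ℝ))))
        - f xstar
      ≤ (1 - lam / ∑ j, L j) * (f x - f xstar) := by
  haveI : Nonempty (Fin n) := ⟨⟨0, hn⟩⟩
  set S : ℝ := ∑ j, L j with hSdef
  have hS : 0 < S := Finset.sum_pos (fun i _ => hL i) Finset.univ_nonempty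
  set g : (Fin n → ℝ) → Fin n → ℝ :=
    fun x i => fderiv ℝ f x ((Pi.single i 1 : Fin n → ℝ)) with hgdef
  -- descent lemma along each coordinate
  have hdesc : ∀ (x : Fin n → ℝ) (i : Fin n) (h : ℝ),
      f (x + h • (Pi.single i 1 : Fin n → ℝ)) ≤ f x + h * g x i + L i / 2 * h ^ 2 := by
    intro x i h
    set e : Fin n → ℝ := (Pi.single i 1 : Fin n → ℝ) with he
    have he0 : x + (0 : ℝ) • e = x := by simp
    have hder : ∀ t : ℝ, HasDerivAt (fun t : ℝ => f (x + t • e))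
        (fderiv ℝ f (x + t • e) e) t := by
      intro t
      have hline : HasDerivAt (fun t : ℝ => x + t • e) e t := by
        simpa using ((hasDerivAt_id t).smul_const e).const_add x
      exact (hf (x + t • e)).hasFDerivAt.comp_hasDerivAt t hline
    have := stp_descent_aux (fun t => f (x + t • e))
      (fun t => fderiv ℝ f (x + t • e) e) (L i) (hL i).le hder
      (fun t => by simpa [he0] using hlip i x t) h
    simpa [he0, hgdef] using this
  -- strong-convexity lower bound, coordinatized
  have hsclow : ∀ x y : Fin n → ℝ,
      f x + (∑ i, (y i - x i) * g x i) + lam / 2 * ∑ i, (y i - x i) ^ 2 ≤ f y := by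
    intro x y
    have h1 := stp_sc_lower f hf lam hsc x y
    have h2 : (fderiv ℝ f x) (y - x) = ∑ i, (y i - x i) * g x i := by
      rw [stp_clm_apply (fderiv ℝ f x) (y - x)]
      exact Finset.sum_congr rfl fun i _ => by simp [hgdef]
    linarith [h1, h2.symm.le, h2.le]
  -- gradient vanishes at the minimizer
  have hgrad0 : fderiv ℝ f xstar = 0 := by
    have hloc : IsLocalMin f xstar := Filter.Eventually.of_forall hmin
    exact hloc.fderiv_eq_zero
  have hgstar : ∀ i, g xstar i = 0 := by
    intro i; simp [hgdef, hgrad0]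
  -- lam ≤ S
  have hlamS : lam ≤ S := by
    set i0 : Fin n := ⟨0, hn⟩
    have h1 := hdesc xstar i0 1
    have h2 := hsclow xstar (xstar + (1 : ℝ) • (Pi.single i0 1 : Fin n → ℝ))
    have hsq : ∑ i, ((xstar + (1 : ℝ) • (Pi.single i0 1 : Fin n → ℝ)) i - xstar i) ^ 2
        = 1 := by
      simp [Pi.single_apply]
    have hlin : ∑ i, ((xstar + (1 : ℝ) • (Pi.single i0 1 : Fin n → ℝ)) i - xstar i) * g xstar i
        = 0 := by
      simp [hgstar]
    rw [hsq, hlin] at h2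
    have hLi0 : lam ≤ L i0 := by
      have := hgstar i0
      nlinarith [h1, h2]
    have : L i0 ≤ S := Finset.single_le_sum (fun i _ => (hL i).le) (Finset.mem_univ i0)
    linarith
  refine ⟨hlamS, ?_⟩
  intro x
  -- per-coordinate progress
  have hper : ∀ i : Fin n,
      min (f (x + (|g x i| / L i) • (Pi.single i 1 : Fin n → ℝ)))
          (f (x - (|g x i| / L i) • (Pi.single i 1 : Fin n → ℝ)))
        ≤ f x - (g x i) ^ 2 / (2 * L i) := by
    intro i
    have hLi := hL i
    have hd := hdesc x i (-(g x i) / L i)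
    have hval : f x + (-(g x i) / L i) * g x i + L i / 2 * (-(g x i) / L i) ^ 2
        = f x - (g x i) ^ 2 / (2 * L i) := by
      field_simp
      ring
    rw [hval] at hd
    rcases le_or_gt 0 (g x i) with hg | hg
    · have habs : |g x i| = g x i := abs_of_nonneg hg
      have hpt : x + (-(g x i) / L i) • (Pi.single i 1 : Fin n → ℝ)
          = x - (|g x i| / L i) • (Pi.single i 1 : Fin n → ℝ) := by
        rw [habs, neg_div, neg_smul, ← sub_eq_add_neg]
      rw [hpt] at hd
      exact le_trans (min_le_right _ _) hd
    · have habs : |g x i| = -(g x i) := abs_of_neg hg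
      have hpt : x + (-(g x i) / L i) • (Pi.single i 1 : Fin n → ℝ)
          = x + (|g x i| / L i) • (Pi.single i 1 : Fin n → ℝ) := by
        rw [habs, neg_div]
      rw [hpt] at hd
      exact le_trans (min_le_left _ _) hd
  -- PL inequality
  have hPL : 2 * lam * (f x - f xstar) ≤ ∑ i, (g x i) ^ 2 := by
    have h2 := hsclow x xstar
    have hterm : ∀ i : Fin n,
        -((g x i) ^ 2 / (2 * lam)) ≤ (xstar i - x i) * g x i + lam / 2 * (xstar i - x i) ^ 2 := by
      intro i
      have hkey : (0:ℝ) ≤ (lam * (xstar i - x i) + g x i) ^ 2 / (2 * lam) := by positivity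
      have hid : (xstar i - x i) * g x i + lam / 2 * (xstar i - x i) ^ 2 + (g x i) ^ 2 / (2 * lam)
          = (lam * (xstar i - x i) + g x i) ^ 2 / (2 * lam) := by
        field_simp
        ring
      linarith
    have hsum : ∑ i, -((g x i) ^ 2 / (2 * lam))
        ≤ ∑ i, ((xstar i - x i) * g x i + lam / 2 * (xstar i - x i) ^ 2) :=
      Finset.sum_le_sum fun i _ => hterm i
    have hleft : ∑ i, -((g x i) ^ 2 / (2 * lam)) = -(∑ i, (g x i) ^ 2) / (2 * lam) := by
      rw [Finset.sum_neg_distrib, ← Finset.sum_div, neg_div]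
    have hsplit : ∑ i, ((xstar i - x i) * g x i + lam / 2 * (xstar i - x i) ^ 2)
        = (∑ i, (xstar i - x i) * g x i) + lam / 2 * ∑ i, (xstar i - x i) ^ 2 := by
      rw [Finset.sum_add_distrib, Finset.mul_sum]
    rw [hleft, hsplit] at hsum
    have hstar : f x - f xstar ≤ (∑ i, (g x i) ^ 2) / (2 * lam) := by
      have hnd : (-(∑ i, (g x i) ^ 2)) / (2 * lam) = -((∑ i, (g x i) ^ 2) / (2 * lam)) :=
        neg_div _ _
      linarith [h2, hsum, hnd]
    rw [le_div_iff₀ (by positivity)] at hstar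
    linarith
  -- assemble
  have hsum1 : ∑ i, (L i / S) *
      (min (f (x + (|g x i| / L i) • (Pi.single i 1 : Fin n → ℝ)))
           (f (x - (|g x i| / L i) • (Pi.single i 1 : Fin n → ℝ))))
      ≤ ∑ i, (L i / S) * (f x - (g x i) ^ 2 / (2 * L i)) :=
    Finset.sum_le_sum fun i _ =>
      mul_le_mul_of_nonneg_left (hper i) (div_nonneg (hL i).le hS.le)
  have hsum2 : ∑ i, (L i / S) * (f x - (g x i) ^ 2 / (2 * L i))
      = f x - (∑ i, (g x i) ^ 2) / (2 * S) := by
    have hterm : ∀ i : Fin n, (L i / S) * (f x - (g x i) ^ 2 / (2 * L i))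
        = (L i / S) * f x - (g x i) ^ 2 / (2 * S) := by
      intro i
      have hLi := (hL i).ne'
      have hSne := hS.ne'
      field_simp
    rw [Finset.sum_congr rfl fun i _ => hterm i, Finset.sum_sub_distrib,
      ← Finset.sum_mul, ← Finset.sum_div, ← Finset.sum_div, div_self hS.ne', one_mul]
  have hfinal : lam / S * (f x - f xstar) ≤ (∑ i, (g x i) ^ 2) / (2 * S) := by
    rw [div_mul_eq_mul_div, div_le_div_iff₀ hS (by linarith : (0:ℝ) < 2 * S)]
    nlinarith [mul_le_mul_of_nonneg_right hPL hS.le]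
  calc (∑ i, (L i / S) *
      (min (f (x + (|g x i| / L i) • (Pi.single i 1 : Fin n → ℝ)))
           (f (x - (|g x i| / L i) • (Pi.single i 1 : Fin n → ℝ))))) - f xstar
      ≤ f x - (∑ i, (g x i) ^ 2) / (2 * S) - f xstar := by
        rw [← hsum2]; linarith [hsum1]
    _ ≤ f x - lam / S * (f x - f xstar) - f xstar := by linarith [hfinal]
    _ = (1 - lam / S) * (f x - f xstar) := by ring
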